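/- Let V be an N-dimensional vector space over a field F of characteristic ≠ 2 with a nondegenerate quadratic form Q. Then the center of the Clifford algebra Cl(V,Q) has dimension 1 if N is even and dimension 2 if N is odd. -/

import Mathlib

open CliffordAlgebra Module Finset

section Aux

variable {F : Type} [Field F] {V : Type} [AddCommGroup V] [Module F V]
  {Q : QuadraticForm F V} {N : ℕ}

variable (Q) in
/-- Images of basis vectors in the Clifford algebra. -/
noncomputable def clE (b : Basis (Fin N) F V) (i : Fin N) : CliffordAlgebra Q :=
  ι Q (b i)

variable (Q) in
/-- Product of a list of generators. -/
noncomputable def clP (b : Basis (Fin N) F V) (l : List (Fin N)) : CliffordAlgebra Q :=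
  (l.map (clE Q b)).prod

variable (Q) in
/-- Monomial indexed by a finite set. -/
noncomputable def clM (b : Basis (Fin N) F V) (S : Finset (Fin N)) : CliffordAlgebra Q :=
  clP Q b (S.sort (· ≤ ·))

variable {b : Basis (Fin N) F V}

section basic
variable (horth : ∀ i j : Fin N, i ≠ j → QuadraticMap.polar Q (b i) (b j) = 0)

@[simp] lemma clP_nil : clP Q b [] = 1 := rfl

lemma clP_cons (i : Fin N) (l : List (Fin N)) :
    clP Q b (i :: l) = clE Q b i * clP Q b l := by
  simp [clP]

@[simp] lemma clM_empty : clM Q b ∅ = 1 := by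
  simp [clM, clP]

lemma clE_sq (i : Fin N) : clE Q b i * clE Q b i = algebraMap F _ (Q (b i)) :=
  ι_sq_scalar Q (b i)

include horth in
lemma clE_anticomm {i j : Fin N} (h : i ≠ j) :
    clE Q b i * clE Q b j = -(clE Q b j * clE Q b i) := by
  have := ι_mul_ι_comm (Q := Q) (b i) (b j)
  rw [horth i j h] at this
  simpa [clE] using this

include horth in
lemma clE_mul_clP {i : Fin N} {l : List (Fin N)} (h : i ∉ l) :
    clE Q b i * clP Q b l = ((-1 : F) ^ l.length) • (clP Q b l * clE Q b i) := by
  induction l with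
  | nil => simp
  | cons j t ih =>
    have hij : i ≠ j := fun e => h (e ▸ (List.mem_cons_self : j ∈ j :: t))
    have hit : i ∉ t := fun e => h (List.mem_cons_of_mem _ e)
    rw [clP_cons, ← mul_assoc, clE_anticomm horth hij, neg_mul, mul_assoc,
      ih hit, List.length_cons]
    rw [mul_smul_comm]
    rw [pow_succ, mul_comm, ← smul_smul]
    simp [mul_assoc]

include horth in
lemma clP_perm {l l' : List (Fin N)} (hp : l.Perm l') (hn : l.Nodup) :
    ∃ c : F, (c = 1 ∨ c = -1) ∧ clP Q b l = c • clP Q b l' := by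
  induction hp with
  | nil => exact ⟨1, Or.inl rfl, by simp⟩
  | cons x h ih =>
    obtain ⟨c, hc, he⟩ := ih (List.Nodup.of_cons hn)
    exact ⟨c, hc, by rw [clP_cons, clP_cons, he, mul_smul_comm]⟩
  | swap x y l =>
    have hxy : y ≠ x := (List.nodup_cons.1 hn).1 ∘ fun e => e ▸ (List.mem_cons_self : x ∈ x :: l)
    refine ⟨-1, Or.inr rfl, ?_⟩
    rw [clP_cons, clP_cons, clP_cons, clP_cons, ← mul_assoc, ← mul_assoc,
      clE_anticomm horth hxy]
    simp
  | trans h₁ h₂ ih₁ ih₂ =>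
    obtain ⟨c, hc, he⟩ := ih₁ hn
    obtain ⟨c', hc', he'⟩ := ih₂ (h₁.nodup_iff.1 hn)
    refine ⟨c * c', ?_, by rw [he, he', smul_smul]⟩
    rcases hc with rfl | rfl <;> rcases hc' with rfl | rfl <;> simp

end basic



section monos
variable (horth : ∀ i j : Fin N, i ≠ j → QuadraticMap.polar Q (b i) (b j) = 0)

include horth in
lemma clE_mul_clM_not_mem {i : Fin N} {S : Finset (Fin N)} (h : i ∉ S) :
    ∃ c : F, c ≠ 0 ∧ clE Q b i * clM Q b S = c • clM Q b (insert i S) := by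
  have hp : (i :: S.sort (· ≤ ·)).Perm ((insert i S).sort (· ≤ ·)) := by
    apply List.perm_of_nodup_nodup_toFinset_eq
    · exact List.nodup_cons.2 ⟨by simpa using h, S.sort_nodup _⟩
    · exact Finset.sort_nodup _ _
    · simp [List.toFinset_cons, Finset.sort_toFinset]
  obtain ⟨c, hc, he⟩ := clP_perm horth hp
    (List.nodup_cons.2 ⟨by simpa using h, S.sort_nodup _⟩)
  refine ⟨c, ?_, ?_⟩
  · rcases hc with rfl | rfl <;> simp
  · rw [clM, ← clP_cons, he]; rfl

include horth in
lemma clM_eq_of_mem {i : Fin N} {S : Finset (Fin N)} (h : i ∈ S) :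
    ∃ c : F, (c = 1 ∨ c = -1) ∧
      clM Q b S = c • (clE Q b i * clM Q b (S.erase i)) := by
  have hp : (S.sort (· ≤ ·)).Perm (i :: (S.erase i).sort (· ≤ ·)) := by
    apply List.perm_of_nodup_nodup_toFinset_eq (Finset.sort_nodup _ _)
    · exact List.nodup_cons.2 ⟨by simp, Finset.sort_nodup _ _⟩
    · simp [List.toFinset_cons, Finset.sort_toFinset, Finset.insert_erase h]
  obtain ⟨c, hc, he⟩ := clP_perm horth hp (Finset.sort_nodup _ _)
  exact ⟨c, hc, by rw [clM, he, clP_cons]; rfl⟩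

include horth in
lemma clE_mul_clM (i : Fin N) (S : Finset (Fin N)) :
    clE Q b i * clM Q b S = ((-1 : F) ^ (S.erase i).card) • (clM Q b S * clE Q b i) := by
  by_cases h : i ∈ S
  · obtain ⟨c, _, he⟩ := clM_eq_of_mem horth h
    have hi : i ∉ (S.erase i).sort (· ≤ ·) := by simp
    have h2 : ((-1 : F) ^ (S.erase i).card) * ((-1 : F) ^ (S.erase i).card) = 1 := by
      rw [← pow_add, ← two_mul, pow_mul]; simp
    have key : clE Q b i * clM Q b (S.erase i)
        = ((-1 : F) ^ (S.erase i).card) • (clM Q b (S.erase i) * clE Q b i) := by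
      have := clE_mul_clP horth (l := (S.erase i).sort (· ≤ ·)) hi
      rw [Finset.length_sort] at this
      exact this
    have key' : clM Q b (S.erase i) * clE Q b i
        = ((-1 : F) ^ (S.erase i).card) • (clE Q b i * clM Q b (S.erase i)) := by
      rw [key, smul_smul, h2, one_smul]
    rw [he, smul_mul_assoc, mul_smul_comm, mul_assoc, key', mul_smul_comm, ← mul_assoc,
      clE_sq]
    rw [smul_smul, smul_smul]
    congr 1
    rw [mul_comm _ c, mul_assoc, h2, mul_one]
  · rw [Finset.erase_eq_of_notMem h]
    have hi : i ∉ S.sort (· ≤ ·) := by simpa using h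
    have := clE_mul_clP horth (l := S.sort (· ≤ ·)) hi
    rw [Finset.length_sort] at this
    exact this

include horth in
lemma clE_mul_clM_mem_span (i : Fin N) (S : Finset (Fin N)) :
    clE Q b i * clM Q b S ∈ Submodule.span F (Set.range (clM Q b)) := by
  by_cases h : i ∈ S
  · obtain ⟨c, _, he⟩ := clM_eq_of_mem horth h
    have h2 : ((-1 : F) ^ 2 : F) = 1 := by norm_num
    have : clE Q b i * clM Q b S
        = (c * Q (b i)) • clM Q b (S.erase i) := by
      rw [he, mul_smul_comm, ← mul_assoc, clE_sq, Algebra.algebraMap_eq_smul_one,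
        smul_mul_assoc, one_mul, smul_smul, mul_comm]
    rw [this]
    exact Submodule.smul_mem _ _ (Submodule.subset_span ⟨_, rfl⟩)
  · obtain ⟨c, _, he⟩ := clE_mul_clM_not_mem horth h
    rw [he]
    exact Submodule.smul_mem _ _ (Submodule.subset_span ⟨_, rfl⟩)

include horth in
lemma ι_mul_mem_span (v : V) (x : CliffordAlgebra Q)
    (hx : x ∈ Submodule.span F (Set.range (clM Q b))) :
    ι Q v * x ∈ Submodule.span F (Set.range (clM Q b)) := by
  set M := Submodule.span F (Set.range (clM Q b)) with hM
  have hbasis : ∀ S, ι Q v * clM Q b S ∈ M := by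
    intro S
    have hv : ι Q v = ∑ i, b.repr v i • clE Q b i := by
      conv_lhs => rw [← b.sum_repr v]
      simp only [clE, map_sum, map_smul]
    rw [hv, Finset.sum_mul]
    exact Submodule.sum_mem _ fun i _ => by
      rw [smul_mul_assoc]
      exact Submodule.smul_mem _ _ (clE_mul_clM_mem_span horth i S)
  have : M ≤ M.comap (LinearMap.mulLeft F (ι Q v)) := by
    rw [hM, Submodule.span_le]
    rintro _ ⟨S, rfl⟩
    exact hbasis S
  exact this hx

include horth in
lemma clM_span_top : Submodule.span F (Set.range (clM Q b)) = ⊤ := by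
  set M := Submodule.span F (Set.range (clM Q b)) with hM
  have hone : (1 : CliffordAlgebra Q) ∈ M := by
    have : clM Q b ∅ = 1 := clM_empty
    exact this ▸ Submodule.subset_span ⟨∅, rfl⟩
  have key : ∀ x : CliffordAlgebra Q, ∀ m ∈ M, x * m ∈ M := by
    intro x
    induction x using CliffordAlgebra.induction with
    | algebraMap r => intro m hm; rw [Algebra.algebraMap_eq_smul_one, smul_mul_assoc, one_mul]
                      exact Submodule.smul_mem _ _ hm
    | ι v => exact fun m hm => ι_mul_mem_span horth v m hm
    | mul x y hx hy => intro m hm; rw [mul_assoc]; exact hx _ (hy _ hm)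
    | add x y hx hy => intro m hm; rw [add_mul]; exact Submodule.add_mem _ (hx _ hm) (hy _ hm)
  rw [eq_top_iff]
  intro x _
  simpa using key x 1 hone

end monos

section fock

variable (Q b) in
/-- Sign used in the fermionic Fock representation. -/
noncomputable def fsgn (i : Fin N) (S : Finset (Fin N)) : F :=
  (-1) ^ (S.filter (· < i)).card

lemma fsgn_mul_self (i : Fin N) (S : Finset (Fin N)) :
    (fsgn (F := F) i S) * fsgn i S = 1 := by
  rw [fsgn, ← pow_add, ← two_mul, pow_mul]; simp

lemma fsgn_ne_zero (i : Fin N) (S : Finset (Fin N)) : (fsgn (F := F) i S) ≠ 0 := by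
  intro h
  have := fsgn_mul_self (F := F) i S
  rw [h, mul_zero] at this
  exact zero_ne_one this

lemma filter_erase_self (i : Fin N) (S : Finset (Fin N)) :
    (S.erase i).filter (· < i) = S.filter (· < i) := by
  ext j
  simp only [Finset.mem_filter, Finset.mem_erase]
  exact ⟨fun h => ⟨h.1.2, h.2⟩, fun h => ⟨⟨fun e => absurd (e ▸ h.2) (lt_irrefl i), h.1⟩, h.2⟩⟩

lemma filter_insert_self (i : Fin N) (S : Finset (Fin N)) :
    (insert i S).filter (· < i) = S.filter (· < i) := by
  ext j
  simp only [Finset.mem_filter, Finset.mem_insert]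
  constructor
  · rintro ⟨rfl | h, h2⟩
    · exact absurd h2 (lt_irrefl _)
    · exact ⟨h, h2⟩
  · exact fun h => ⟨Or.inr h.1, h.2⟩

lemma fsgn_erase_self (i : Fin N) (S : Finset (Fin N)) :
    fsgn (F := F) i (S.erase i) = fsgn i S := by
  rw [fsgn, fsgn, filter_erase_self]

lemma fsgn_insert_self (i : Fin N) (S : Finset (Fin N)) :
    fsgn (F := F) i (insert i S) = fsgn i S := by
  rw [fsgn, fsgn, filter_insert_self]

lemma fsgn_erase_of_not_lt {i j : Fin N} (h : ¬ j < i) (S : Finset (Fin N)) :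
    fsgn (F := F) i (S.erase j) = fsgn i S := by
  rw [fsgn, fsgn]
  congr 2
  ext k
  simp only [Finset.mem_filter, Finset.mem_erase]
  exact ⟨fun hh => ⟨hh.1.2, hh.2⟩,
    fun hh => ⟨⟨fun e => h (e ▸ hh.2), hh.1⟩, hh.2⟩⟩

lemma fsgn_insert_of_not_lt {i j : Fin N} (h : ¬ j < i) (S : Finset (Fin N)) :
    fsgn (F := F) i (insert j S) = fsgn i S := by
  rw [fsgn, fsgn]
  congr 2
  ext k
  simp only [Finset.mem_filter, Finset.mem_insert]
  constructor
  · rintro ⟨rfl | hk, h2⟩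
    · exact absurd h2 h
    · exact ⟨hk, h2⟩
  · exact fun hh => ⟨Or.inr hh.1, hh.2⟩

lemma fsgn_erase_of_lt {i j : Fin N} (h : j < i) {S : Finset (Fin N)} (hj : j ∈ S) :
    fsgn (F := F) i (S.erase j) = -fsgn i S := by
  have hfe : (S.erase j).filter (· < i) = (S.filter (· < i)).erase j := by
    ext k
    simp only [Finset.mem_filter, Finset.mem_erase]
    tauto
  have hjm : j ∈ S.filter (· < i) := Finset.mem_filter.2 ⟨hj, h⟩
  have hpos : 0 < (S.filter (· < i)).card := Finset.card_pos.2 ⟨j, hjm⟩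
  obtain ⟨m, hm⟩ : ∃ m, (S.filter (· < i)).card = m + 1 :=
    ⟨_, (Nat.succ_pred_eq_of_pos hpos).symm⟩
  rw [fsgn, fsgn, hfe, Finset.card_erase_of_mem hjm, hm, Nat.add_sub_cancel, pow_succ]
  ring

lemma fsgn_insert_of_lt {i j : Fin N} (h : j < i) {S : Finset (Fin N)} (hj : j ∉ S) :
    fsgn (F := F) i (insert j S) = -fsgn i S := by
  have : fsgn (F := F) i ((insert j S).erase j) = -fsgn i (insert j S) :=
    fsgn_erase_of_lt h (Finset.mem_insert_self j S)
  rw [Finset.erase_insert hj] at this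
  rw [this, neg_neg]

variable (Q b) in
/-- The Fock representation operators. -/
noncomputable def fockT (i : Fin N) :
    (Finset (Fin N) → F) →ₗ[F] (Finset (Fin N) → F) where
  toFun f S := fsgn i S * (if i ∈ S then f (S.erase i) else Q (b i) * f (insert i S))
  map_add' f g := by
    funext S
    by_cases h : i ∈ S <;> simp [h] <;> ring
  map_smul' c f := by
    funext S
    by_cases h : i ∈ S <;> simp [h, smul_eq_mul] <;> ring

lemma fockT_apply (i : Fin N) (f : Finset (Fin N) → F) (S : Finset (Fin N)) :
    fockT Q b i f S
      = fsgn i S * (if i ∈ S then f (S.erase i) else Q (b i) * f (insert i S)) := rfl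

lemma fockT_sq (i : Fin N) (f : Finset (Fin N) → F) :
    fockT Q b i (fockT Q b i f) = Q (b i) • f := by
  funext S
  rw [fockT_apply]
  by_cases h : i ∈ S
  · rw [if_pos h, fockT_apply, if_neg (Finset.notMem_erase i S),
      Finset.insert_erase h, fsgn_erase_self, Pi.smul_apply, smul_eq_mul]
    rw [← mul_assoc, ← mul_assoc, fsgn_mul_self, one_mul]
  · rw [if_neg h, fockT_apply, if_pos (Finset.mem_insert_self i S),
      Finset.erase_insert h, fsgn_insert_self, Pi.smul_apply, smul_eq_mul]
    ring_nf
    rw [sq, fsgn_mul_self, one_mul]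

lemma fockT_anticomm_aux {i j : Fin N} (h : j < i) (f : Finset (Fin N) → F)
    (S : Finset (Fin N)) :
    fockT Q b i (fockT Q b j f) S + fockT Q b j (fockT Q b i f) S = 0 := by
  have hij : i ≠ j := (h.ne).symm
  have hji : j ≠ i := h.ne
  have hnlt : ¬ i < j := lt_asymm h
  simp only [fockT_apply]
  by_cases hi : i ∈ S <;> by_cases hj : j ∈ S
  · rw [if_pos hi, if_pos hj,
      if_pos (Finset.mem_erase.2 ⟨hji, hj⟩), if_pos (Finset.mem_erase.2 ⟨hij, hi⟩),
      fsgn_erase_of_not_lt hnlt, fsgn_erase_of_lt h hj,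
      Finset.erase_right_comm (a := i) (b := j)]
    ring
  · rw [if_pos hi, if_neg hj,
      if_neg (fun hc => hj (Finset.mem_of_mem_erase hc)),
      if_pos (Finset.mem_insert_of_mem hi),
      fsgn_erase_of_not_lt hnlt, fsgn_insert_of_lt h hj,
      Finset.erase_insert_of_ne hij.symm]
    ring
  · rw [if_neg hi, if_pos hj,
      if_pos (Finset.mem_insert_of_mem hj),
      if_neg (fun hc => hi (Finset.mem_of_mem_erase hc)),
      fsgn_insert_of_not_lt hnlt, fsgn_erase_of_lt h hj,
      Finset.erase_insert_of_ne hji.symm]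
    ring
  · rw [if_neg hi, if_neg hj,
      if_neg (by simp [hij.symm, hj]), if_neg (by simp [hji.symm, hi]),
      fsgn_insert_of_not_lt hnlt, fsgn_insert_of_lt h hj,
      Finset.insert_comm]
    ring

lemma fockT_anticomm {i j : Fin N} (h : i ≠ j) (f : Finset (Fin N) → F) :
    fockT Q b i (fockT Q b j f) + fockT Q b j (fockT Q b i f) = 0 := by
  funext S
  rcases h.lt_or_gt with hlt | hlt
  · have := fockT_anticomm_aux (Q := Q) (b := b) hlt f S
    rw [add_comm] at this
    simpa using this
  · simpa using fockT_anticomm_aux (Q := Q) (b := b) hlt f S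

end fock

section rep

lemma sum_sum_antisymm {M : Type} [AddCommGroup M] [Module F M] (hchar : (2 : F) ≠ 0)
    {n : ℕ} (A : Fin n → Fin n → M) (h : ∀ i j, i ≠ j → A i j + A j i = 0) :
    ∑ i, ∑ j, A i j = ∑ i, A i i := by
  have hswap : ∑ i, ∑ j, A i j = ∑ i, ∑ j, A j i := Finset.sum_comm
  have key : (∑ i, ∑ j, A i j) + (∑ i, ∑ j, A i j)
      = ∑ i, (A i i + A i i) := by
    nth_rewrite 2 [hswap]
    rw [← Finset.sum_add_distrib]
    refine Finset.sum_congr rfl fun i _ => ?_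
    rw [← Finset.sum_add_distrib]
    have hterm : ∀ j : Fin n, A i j + A j i = if j = i then A i i + A i i else 0 := by
      intro j
      by_cases e : j = i
      · subst e; simp
      · rw [if_neg e]
        exact h i j (fun e' => e e'.symm)
    rw [Finset.sum_congr rfl fun j _ => hterm j,
      Finset.sum_ite_eq' Finset.univ i (fun _ => A i i + A i i)]
    simp
  have h2 : (2 : F) • (∑ i, ∑ j, A i j) = (2 : F) • (∑ i, A i i) := by
    rw [two_smul, two_smul, key, Finset.sum_add_distrib]
  calc ∑ i, ∑ j, A i j
      = (2 : F)⁻¹ • ((2 : F) • ∑ i, ∑ j, A i j) := by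
        rw [smul_smul, inv_mul_cancel₀ hchar, one_smul]
    _ = ∑ i, A i i := by rw [h2, smul_smul, inv_mul_cancel₀ hchar, one_smul]

variable (horth : ∀ i j : Fin N, i ≠ j → QuadraticMap.polar Q (b i) (b j) = 0)
variable (hchar : (2 : F) ≠ 0)

lemma fockT_mul_self (i : Fin N) :
    fockT Q b i * fockT Q b i = Q (b i) • (1 : Module.End F (Finset (Fin N) → F)) := by
  refine DFunLike.ext _ _ fun f => ?_
  rw [Module.End.mul_apply, fockT_sq]
  rfl

omit horth in
lemma fockT_mul_anticomm {i j : Fin N} (h : i ≠ j) :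
    fockT Q b i * fockT Q b j + fockT Q b j * fockT Q b i
      = (0 : Module.End F (Finset (Fin N) → F)) := by
  refine DFunLike.ext _ _ fun f => ?_
  rw [LinearMap.add_apply, Module.End.mul_apply, Module.End.mul_apply, LinearMap.zero_apply]
  exact fockT_anticomm (Q := Q) (b := b) h f

include horth hchar in
lemma fock_constr_sq (v : V) :
    (b.constr F (fockT Q b)) v * (b.constr F (fockT Q b)) v
      = algebraMap F (Module.End F (Finset (Fin N) → F)) (Q v) := by
  rw [Basis.constr_apply_fintype, Finset.sum_mul_sum]
  set c : Fin N → F := fun i => b.equivFun v i with hc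
  have hterm : ∀ i j : Fin N,
      (c i • fockT Q b i) * (c j • fockT Q b j)
        = (c i * c j) • (fockT Q b i * fockT Q b j) := by
    intro i j
    rw [smul_mul_assoc, mul_smul_comm, smul_smul]
  change ∑ i, ∑ j, c i • fockT Q b i * c j • fockT Q b j = _
  simp_rw [hterm]
  rw [sum_sum_antisymm hchar _ (fun i j hij => by
    rw [mul_comm (c j) (c i), ← smul_add, fockT_mul_anticomm hij, smul_zero])]
  simp_rw [fockT_mul_self, smul_smul]
  rw [← Finset.sum_smul]
  have hv : Q v = ∑ i, c i * c i * Q (b i) := by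
    conv_lhs => rw [← b.sum_equivFun v]
    rw [QuadraticMap.map_sum]
    have hzero : ∑ ij ∈ Finset.univ.sym2 with ¬ ij.IsDiag,
        Sym2.lift ⟨fun i j => QuadraticMap.polar Q (c i • b i) (c j • b j),
          fun _ _ => QuadraticMap.polar_comm _ _ _⟩ ij = 0 := by
      apply Finset.sum_eq_zero
      intro ij hij
      rw [Finset.mem_filter] at hij
      induction ij using Sym2.ind with
      | _ i j =>
        have hne : i ≠ j := by
          intro e; exact hij.2 (by simp [e])
        simp only [Sym2.lift_mk]
        rw [QuadraticMap.polar_smul_left, QuadraticMap.polar_smul_right,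
          horth i j hne]
        simp
    rw [show (∑ ij ∈ Finset.univ.sym2 with ¬ ij.IsDiag, QuadraticMap.polarSym2 Q
        (Sym2.map (fun i => b.equivFun v i • b i) ij)) = 0 from by
      rw [← hzero]
      refine Finset.sum_congr rfl fun ij _ => ?_
      induction ij using Sym2.ind
      rfl, add_zero]
    congr 1
    funext i
    rw [QuadraticMap.map_smul, smul_eq_mul]
  rw [hv, Algebra.algebraMap_eq_smul_one]

variable (Q b) in
include horth hchar in
/-- The Fock representation of the Clifford algebra. -/
noncomputable def fockRep : CliffordAlgebra Q →ₐ[F] Module.End F (Finset (Fin N) → F) :=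
  CliffordAlgebra.lift Q ⟨b.constr F (fockT Q b), fock_constr_sq horth hchar⟩

lemma fockRep_clE (i : Fin N) :
    fockRep Q b horth hchar (clE Q b i) = fockT Q b i := by
  rw [fockRep, clE, CliffordAlgebra.lift_ι_apply, Basis.constr_basis]

variable (F N) in
/-- Delta function. -/
def fockδ (S : Finset (Fin N)) : Finset (Fin N) → F := Pi.single S 1

lemma fockδ_apply (S X : Finset (Fin N)) :
    fockδ F N S X = if X = S then (1 : F) else 0 := Pi.single_apply _ _ _

lemma fockT_single {i : Fin N} {S : Finset (Fin N)} (h : i ∉ S) :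
    fockT Q b i (fockδ F N S) = fsgn (F := F) i (insert i S) • fockδ F N (insert i S) := by
  funext X
  rw [fockT_apply, Pi.smul_apply, smul_eq_mul]
  simp only [fockδ]
  by_cases hX : i ∈ X
  · rw [if_pos hX]
    by_cases hXS : X = insert i S
    · subst hXS
      rw [Finset.erase_insert h]
      simp [Pi.single_apply]
    · have h1 : X.erase i ≠ S := fun e => hXS (by rw [← e, Finset.insert_erase hX])
      simp [Pi.single_apply, h1, hXS]
  · rw [if_neg hX]
    have h1 : insert i X ≠ S := fun e => h (e ▸ Finset.mem_insert_self i X)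
    have h2 : X ≠ insert i S := fun e => hX (e ▸ Finset.mem_insert_self i S)
    simp [Pi.single_apply, h1, h2]

include horth hchar in
lemma fock_eval (l : List (Fin N)) (hn : l.Nodup) :
    ∃ c : F, c ≠ 0 ∧ fockRep Q b horth hchar (clP Q b l) (fockδ F N ∅)
      = c • fockδ F N l.toFinset := by
  induction l with
  | nil =>
    refine ⟨1, one_ne_zero, ?_⟩
    rw [clP_nil, map_one]
    simp
  | cons i t ih =>
    obtain ⟨c, hc0, hc⟩ := ih (List.Nodup.of_cons hn)
    have hit : i ∉ t.toFinset := by simpa using (List.nodup_cons.1 hn).1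
    refine ⟨c * fsgn (F := F) i (insert i t.toFinset),
      mul_ne_zero hc0 (fsgn_ne_zero _ _), ?_⟩
    rw [clP_cons, map_mul, Module.End.mul_apply, hc, map_smul,
      fockRep_clE, fockT_single hit, List.toFinset_cons, smul_smul]

include horth hchar in
lemma clM_linearIndependent : LinearIndependent F (clM Q b) := by
  rw [Fintype.linearIndependent_iff]
  intro g hg S₀
  have heval : ∀ S : Finset (Fin N), ∃ c : F, c ≠ 0 ∧
      fockRep Q b horth hchar (clM Q b S) (fockδ F N ∅)
        = c • fockδ F N S := by
    intro S
    obtain ⟨c, hc0, hc⟩ := fock_eval horth hchar (S.sort (· ≤ ·)) (Finset.sort_nodup _ _)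
    rw [Finset.sort_toFinset] at hc
    exact ⟨c, hc0, hc⟩
  choose c hc0 hc using heval
  have h1 : ∑ S : Finset (Fin N), (g S * c S) • fockδ F N S = (0 : Finset (Fin N) → F) := by
    have h2 := congrArg (fun x => fockRep Q b horth hchar x (fockδ F N ∅)) hg
    simp only [map_sum, map_smul, LinearMap.sum_apply, LinearMap.smul_apply, map_zero,
      LinearMap.zero_apply] at h2
    calc ∑ S : Finset (Fin N), (g S * c S) • fockδ F N S
        = ∑ S : Finset (Fin N),
            g S • (fockRep Q b horth hchar (clM Q b S) (fockδ F N ∅)) := by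
          apply Finset.sum_congr rfl
          intro S _
          rw [hc, smul_smul]
      _ = 0 := h2
  have h3 := congrFun h1 S₀
  simp only [Finset.sum_apply, Pi.smul_apply, fockδ_apply, smul_eq_mul, Pi.zero_apply,
    mul_ite, mul_one, mul_zero] at h3
  rw [Finset.sum_ite_eq Finset.univ S₀ (fun S => g S * c S)] at h3
  simp only [Finset.mem_univ, if_true] at h3
  exact (mul_eq_zero.1 h3).resolve_right (hc0 S₀)

end rep

section center

variable (horth : ∀ i j : Fin N, i ≠ j → QuadraticMap.polar Q (b i) (b j) = 0)
variable (hchar : (2 : F) ≠ 0)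
variable (hQ0 : ∀ i : Fin N, Q (b i) ≠ 0)

include horth in
lemma clM_central {S : Finset (Fin N)} (hS : ∀ i : Fin N, Even ((S.erase i).card)) :
    clM Q b S ∈ Subalgebra.center F (CliffordAlgebra Q) := by
  rw [Subalgebra.mem_center_iff]
  intro y
  induction y using CliffordAlgebra.induction with
  | algebraMap r => exact Algebra.commutes r _
  | ι v =>
    have hE : ∀ i, clE Q b i * clM Q b S = clM Q b S * clE Q b i := by
      intro i
      rw [clE_mul_clM horth i S, Even.neg_one_pow (hS i), one_smul]
    have hv : ι Q v = ∑ i, b.repr v i • clE Q b i := by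
      conv_lhs => rw [← b.sum_repr v]
      simp only [clE, map_sum, map_smul]
    rw [hv, Finset.sum_mul, Finset.mul_sum]
    refine Finset.sum_congr rfl fun i _ => ?_
    rw [smul_mul_assoc, mul_smul_comm, hE i]
  | mul x y hx hy => rw [mul_assoc, hy, ← mul_assoc, hx, mul_assoc]
  | add x y hx hy => rw [add_mul, mul_add, hx, hy]

include horth hchar hQ0 in
lemma central_mem_span {x : CliffordAlgebra Q}
    (hx : x ∈ Subalgebra.center F (CliffordAlgebra Q)) :
    x ∈ Submodule.span F
      (clM Q b '' {S | ∀ i : Fin N, Even ((S.erase i).card)}) := by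
  have hli := clM_linearIndependent horth hchar
  set B : Basis (Finset (Fin N)) F (CliffordAlgebra Q) :=
    Basis.mk hli (by rw [clM_span_top horth]) with hB
  set cf : Finset (Fin N) → F := fun T => B.repr x T with hcf
  have hxe : x = ∑ T, cf T • clM Q b T := by
    conv_lhs => rw [← B.sum_repr x]
    refine Finset.sum_congr rfl fun T _ => ?_
    rw [hB, Basis.coe_mk]
  have hbad : ∀ S : Finset (Fin N), ¬ (∀ i : Fin N, Even ((S.erase i).card)) →
      cf S = 0 := by
    intro S hS
    push_neg at hS
    obtain ⟨i, hodd⟩ := hS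
    rw [Nat.not_even_iff_odd] at hodd
    have hcomm : clE Q b i * x = x * clE Q b i := by
      rw [Subalgebra.mem_center_iff] at hx
      exact hx (clE Q b i)
    have hterm : ∀ T : Finset (Fin N),
        (cf T * ((-1 : F) ^ ((T.erase i).card) - 1)) • clM Q b T * clE Q b i
          = cf T • (clE Q b i * clM Q b T) - cf T • (clM Q b T * clE Q b i) := by
      intro T
      rw [clE_mul_clM horth i T, smul_smul, ← sub_smul, smul_mul_assoc]
      congr 1
      ring
    have hy : (∑ T, (cf T * ((-1 : F) ^ ((T.erase i).card) - 1)) • clM Q b T)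
        * clE Q b i = 0 := by
      rw [Finset.sum_mul]
      calc ∑ T, (cf T * ((-1 : F) ^ ((T.erase i).card) - 1)) • clM Q b T * clE Q b i
          = ∑ T, (cf T • (clE Q b i * clM Q b T) - cf T • (clM Q b T * clE Q b i)) :=
            Finset.sum_congr rfl fun T _ => hterm T
        _ = (∑ T, cf T • (clE Q b i * clM Q b T))
              - ∑ T, cf T • (clM Q b T * clE Q b i) := Finset.sum_sub_distrib _ _
        _ = clE Q b i * x - x * clE Q b i := by
            conv_rhs => rw [hxe]
            rw [Finset.mul_sum, Finset.sum_mul]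
            congr 1
            · exact Finset.sum_congr rfl fun T _ => (mul_smul_comm _ _ _).symm
            · exact Finset.sum_congr rfl fun T _ => (smul_mul_assoc _ _ _).symm
        _ = 0 := by rw [hcomm, sub_self]
    have hy2 : Q (b i) • (∑ T, (cf T * ((-1 : F) ^ ((T.erase i).card) - 1)) • clM Q b T)
        = 0 := by
      have h3 := congrArg (· * clE Q b i) hy
      simp only [zero_mul] at h3
      rw [mul_assoc, clE_sq, Algebra.algebraMap_eq_smul_one, mul_smul_comm, mul_one] at h3
      exact h3
    have hy3 : (∑ T, (cf T * ((-1 : F) ^ ((T.erase i).card) - 1)) • clM Q b T) = 0 :=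
      (smul_eq_zero.1 hy2).resolve_left (hQ0 i)
    have hcoef := Fintype.linearIndependent_iff.1 hli _ hy3 S
    have hfac : ((-1 : F) ^ ((S.erase i).card) - 1) ≠ 0 := by
      rw [Odd.neg_one_pow hodd]
      intro hcon
      apply hchar
      have : (2 : F) = -(-1 - 1) := by ring
      rw [this, hcon, neg_zero]
    exact (mul_eq_zero.1 hcoef).resolve_right hfac
  rw [hxe]
  refine Submodule.sum_mem _ fun T _ => ?_
  by_cases hT : ∀ i : Fin N, Even ((T.erase i).card)
  · exact Submodule.smul_mem _ _ (Submodule.subset_span ⟨T, hT, rfl⟩)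
  · rw [hbad T hT, zero_smul]
    exact Submodule.zero_mem _

include horth hchar hQ0 in
lemma center_toSubmodule_eq :
    Subalgebra.toSubmodule (Subalgebra.center F (CliffordAlgebra Q))
      = Submodule.span F (clM Q b '' {S | ∀ i : Fin N, Even ((S.erase i).card)}) := by
  apply le_antisymm
  · intro x hx
    exact central_mem_span horth hchar hQ0 hx
  · rw [Submodule.span_le]
    rintro _ ⟨S, hS, rfl⟩
    exact clM_central horth hS

lemma good_iff (S : Finset (Fin N)) :
    (∀ i : Fin N, Even ((S.erase i).card))
      ↔ (S = ∅ ∨ (S = Finset.univ ∧ ¬ Even N)) := by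
  constructor
  · intro hS
    by_cases h0 : S = ∅
    · exact Or.inl h0
    obtain ⟨i, hi⟩ := Finset.nonempty_iff_ne_empty.2 h0
    have hpos : 0 < S.card := Finset.card_pos.2 ⟨i, hi⟩
    have hSu : S = Finset.univ := by
      by_contra hSu
      obtain ⟨j, hj⟩ : ∃ j, j ∉ S := by
        by_contra hall
        push_neg at hall
        exact hSu (Finset.eq_univ_iff_forall.2 hall)
      have h1 := hS i
      have h2 := hS j
      rw [Finset.card_erase_of_mem hi] at h1
      rw [Finset.erase_eq_of_notMem hj] at h2
      have hone : 1 ≤ S.card := hpos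
      have : Odd S.card := by
        have := h1.add_one
        rwa [Nat.sub_add_cancel hone] at this
      exact (Nat.not_even_iff_odd.2 this) h2
    refine Or.inr ⟨hSu, ?_⟩
    have h1 := hS i
    rw [hSu, Finset.card_erase_of_mem (Finset.mem_univ i), Finset.card_univ,
      Fintype.card_fin] at h1
    have honeN : 1 ≤ N := i.pos
    have : Odd N := by
      have h2 := h1.add_one
      rwa [Nat.sub_add_cancel honeN] at h2
    exact Nat.not_even_iff_odd.2 this
  · rintro (rfl | ⟨rfl, hN⟩) i
    · simp
    · rw [Finset.card_erase_of_mem (Finset.mem_univ i), Finset.card_univ,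
        Fintype.card_fin]
      exact Nat.Odd.sub_odd (Nat.not_even_iff_odd.1 hN) odd_one

include horth hchar hQ0 in
lemma center_finrank_aux :
    finrank F (Subalgebra.center F (CliffordAlgebra Q)) = if Even N then 1 else 2 := by
  rw [← Subalgebra.finrank_toSubmodule, center_toSubmodule_eq horth hchar hQ0]
  set G : Finset (Finset (Fin N)) :=
    if Even N then {∅} else {∅, Finset.univ} with hG
  have hgood : {S : Finset (Fin N) | ∀ i : Fin N, Even ((S.erase i).card)} = ↑G := by
    ext S
    rw [Set.mem_setOf_eq, good_iff, hG]
    by_cases hN : Even N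
    · simp [hN]
    · simp [hN]
  rw [hgood]
  have himg : clM Q b '' ↑G
      = Set.range (clM Q b ∘ (Subtype.val : {S // S ∈ G} → Finset (Fin N))) := by
    rw [Set.image_eq_range]
    rfl
  rw [himg, finrank_span_eq_card
    ((clM_linearIndependent horth hchar).comp _ Subtype.val_injective),
    Fintype.card_coe]
  by_cases hN : Even N
  · simp [hG, hN]
  · have hne : (∅ : Finset (Fin N)) ≠ Finset.univ := by
      have hN0 : N ≠ 0 := fun h => hN (h ▸ Even.zero)
      have : Nonempty (Fin N) := ⟨⟨0, Nat.pos_of_ne_zero hN0⟩⟩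
      exact Ne.symm Finset.univ_nonempty.ne_empty
    simp [hG, hN, Finset.card_insert_of_notMem, hne]

end center
end Aux

theorem cliffordAlgebra_center_finrank
    (F : Type) [Field F] (hchar : (2 : F) ≠ 0)
    (V : Type) [AddCommGroup V] [Module F V] [FiniteDimensional F V]
    (Q : QuadraticForm F V)
    (hQ : (QuadraticMap.polarBilin Q).Nondegenerate) :
    Module.finrank F (Subalgebra.center F (CliffordAlgebra Q)) =
      if Even (Module.finrank F V) then 1 else 2 := by
  have h2 : Invertible (2 : F) := invertibleOfNonzero hchar
  have hsymm : (QuadraticMap.polarBilin Q).IsSymm := ⟨fun x y => by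
    simp only [RingHom.id_apply, QuadraticMap.polarBilin_apply_apply]
    exact QuadraticMap.polar_comm _ x y⟩
  obtain ⟨b, hb⟩ := LinearMap.BilinForm.exists_orthogonal_basis hsymm
  have horth : ∀ i j : Fin (Module.finrank F V), i ≠ j →
      QuadraticMap.polar Q (b i) (b j) = 0 := by
    intro i j hij
    exact hb hij
  have hQ0 : ∀ i, Q (b i) ≠ 0 := by
    intro i h0
    apply b.ne_zero i
    apply hQ.1
    intro y
    have hmap : (QuadraticMap.polarBilin Q) (b i) = 0 := by
      apply b.ext
      intro j
      by_cases hij : i = j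
      · subst hij
        simp only [QuadraticMap.polarBilin_apply_apply, LinearMap.zero_apply]
        rw [QuadraticMap.polar_self, h0, smul_zero]
      · simp only [QuadraticMap.polarBilin_apply_apply, LinearMap.zero_apply]
        exact horth i j hij
    rw [hmap, LinearMap.zero_apply]
  exact center_finrank_aux horth hchar hQ0
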